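/- Let w_1, …, w_{T+1} be the iterates of OGD with constant step size η. Then for every interval [r, s] ⊆ [1, T] and every comparator sequence u_r, …, u_{s+1} ∈ W: Σ_{t=r}^{s} ( f_t(w_t) + λG‖w_t − w_{t+1}‖ − f_t(u_t) ) ≤ D²/(2η) + (D/η)·Σ_{t=r}^{s} ‖u_t − u_{t+1}‖ + (1 + 2λ)·η·(s − r + 1)·G²/2. -/

import Mathlib

open scoped RealInnerProductSpace

/-- First-order condition for convex differentiable functions. -/
lemma gradIneq {E : Type*} [NormedAddCommGroup E] [InnerProductSpace ℝ E] [CompleteSpace E]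
    {f : E → ℝ} (hc : ConvexOn ℝ Set.univ f) (hd : Differentiable ℝ f) (x y : E) :
    f x + ⟪gradient f x, y - x⟫ ≤ f y := by
  rcases eq_or_ne x y with rfl | hxy
  · simp
  have hg : HasFDerivAt f ((InnerProductSpace.toDual ℝ E) (gradient f x)) x := by
    have := (hd x).hasGradientAt
    rwa [hasGradientAt_iff_hasFDerivAt] at this
  have hL : HasDerivAt (fun θ : ℝ => x + θ • (y - x)) (y - x) 0 := by
    simpa using ((hasDerivAt_id (0 : ℝ)).smul_const (y - x)).const_add x
  have hg0 : HasFDerivAt f ((InnerProductSpace.toDual ℝ E) (gradient f x))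
      (x + (0 : ℝ) • (y - x)) := by simpa using hg
  have hφd : HasDerivAt (fun θ : ℝ => f (x + θ • (y - x))) ⟪gradient f x, y - x⟫ 0 := by
    have := hg0.comp_hasDerivAt 0 hL
    simpa [InnerProductSpace.toDual_apply_apply, Function.comp_def] using this
  have hφc : ConvexOn ℝ Set.univ (fun θ : ℝ => f (x + θ • (y - x))) := by
    have h := hc.comp_affineMap (AffineMap.lineMap x y)
    have e : (f ∘ (AffineMap.lineMap x y) : ℝ → ℝ) = fun θ : ℝ => f (x + θ • (y - x)) := by
      funext θ
      simp [AffineMap.lineMap_apply, add_comm, vsub_eq_sub, vadd_eq_add]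
    rw [e] at h
    simpa using h
  have hs := hφc.le_slope_of_hasDerivAt (Set.mem_univ (0 : ℝ)) (Set.mem_univ (1 : ℝ))
    one_pos hφd
  rw [slope_def_field] at hs
  simp only [one_smul, zero_smul, add_zero] at hs
  have e1 : x + (y - x) = y := by abel
  rw [e1] at hs
  have : ⟪gradient f x, y - x⟫ ≤ f y - f x := by
    simpa using hs
  linarith

/-- Variational inequality for the projection onto a convex set. -/
lemma projVI {E : Type*} [NormedAddCommGroup E] [InnerProductSpace ℝ E]
    {K : Set E} (hK : Convex ℝ K) {x p : E} (hp : p ∈ K)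
    (hmin : ∀ y ∈ K, ‖x - p‖ ≤ ‖x - y‖) : ∀ y ∈ K, ⟪x - p, y - p⟫ ≤ 0 := by
  letI : Nonempty K := ⟨⟨p, hp⟩⟩
  rw [← norm_eq_iInf_iff_real_inner_le_zero hK hp]
  apply le_antisymm
  · exact le_ciInf fun z : K => hmin (z : E) z.2
  · refine ciInf_le ⟨0, ?_⟩ (⟨p, hp⟩ : K)
    rintro _ ⟨z, rfl⟩
    exact norm_nonneg _

set_option maxHeartbeats 1000000 in
/-- **Theorem (dynamic regret with switching cost of OGD over any interval).** -/
theorem ogd_dynamic_regret_switching_cost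
    (d : ℕ) (W : Set (EuclideanSpace ℝ (Fin d)))
    (hWne : W.Nonempty) (hWconv : Convex ℝ W) (hWclosed : IsClosed W)
    (G D : ℝ) (hG : 0 < G) (hD : 0 < D)
    (hdiam : ∀ w ∈ W, ∀ w' ∈ W, ‖w - w'‖ ≤ D)
    (T : ℕ) (f : ℕ → EuclideanSpace ℝ (Fin d) → ℝ)
    (hconv : ∀ t, 1 ≤ t → t ≤ T → ConvexOn ℝ Set.univ (f t))
    (hdiff : ∀ t, 1 ≤ t → t ≤ T → Differentiable ℝ (f t))
    (hgrad : ∀ t, 1 ≤ t → t ≤ T → ∀ w' ∈ W, ‖gradient (f t) w'‖ ≤ G)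
    (hrange : ∀ t, 1 ≤ t → t ≤ T → ∀ w' ∈ W, f t w' ∈ Set.Icc 0 (G * D))
    (lam : ℝ) (hlam : 0 ≤ lam)
    (η : ℝ) (hη : 0 < η)
    (w : ℕ → EuclideanSpace ℝ (Fin d)) (hw1 : w 1 ∈ W)
    (hproj : ∀ t, 1 ≤ t → t ≤ T → w (t + 1) ∈ W ∧
      ∀ y ∈ W, ‖w t - η • gradient (f t) (w t) - w (t + 1)‖
                ≤ ‖w t - η • gradient (f t) (w t) - y‖)
    (r s : ℕ) (hr : 1 ≤ r) (hrs : r ≤ s) (hsT : s ≤ T)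
    (u : ℕ → EuclideanSpace ℝ (Fin d)) (hu : ∀ t, r ≤ t → t ≤ s + 1 → u t ∈ W) :
    ∑ t ∈ Finset.Icc r s,
        (f t (w t) + lam * G * ‖w t - w (t + 1)‖ - f t (u t))
      ≤ D ^ 2 / (2 * η) + (D / η) * ∑ t ∈ Finset.Icc r s, ‖u t - u (t + 1)‖
        + (1 + 2 * lam) * η * ((s : ℝ) - r + 1) * G ^ 2 / 2 := by
  -- all iterates are in W
  have wmem : ∀ t, 1 ≤ t → t ≤ T + 1 → w t ∈ W := by
    intro t
    induction t with
    | zero => intro h; exact absurd h (by omega)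
    | succ k _ =>
      intro _ hk
      rcases Nat.eq_zero_or_pos k with hk0 | hk1
      · subst hk0; exact hw1
      · exact (hproj k hk1 (by omega)).1
  set a : ℕ → ℝ := fun t => ‖w t - u t‖ ^ 2 with ha
  -- per-step bound
  have key : ∀ t ∈ Finset.Icc r s,
      f t (w t) + lam * G * ‖w t - w (t + 1)‖ - f t (u t)
        ≤ (a t - a (t + 1)) / (2 * η) + (D / η) * ‖u t - u (t + 1)‖
          + (1 + 2 * lam) * η * G ^ 2 / 2 := by
    intro t htmem
    rw [Finset.mem_Icc] at htmem
    have ht1 : 1 ≤ t := le_trans hr htmem.1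
    have htT : t ≤ T := le_trans htmem.2 hsT
    set g := gradient (f t) (w t) with hgdef
    have hwtW : w t ∈ W := wmem t ht1 (by omega)
    have hwt1W : w (t + 1) ∈ W := (hproj t ht1 htT).1
    have hutW : u t ∈ W := hu t htmem.1 (by omega)
    have hut1W : u (t + 1) ∈ W := hu (t + 1) (by omega) (by omega)
    have hgG : ‖g‖ ≤ G := hgrad t ht1 htT (w t) hwtW
    have hVI : ∀ y ∈ W, ⟪(w t - η • g) - w (t + 1), y - w (t + 1)⟫ ≤ 0 :=
      projVI hWconv hwt1W (hproj t ht1 htT).2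
    -- switching cost bound
    have hswitch : ‖w t - w (t + 1)‖ ≤ η * G := by
      have h1 := hVI (w t) hwtW
      have hexp : ⟪(w t - η • g) - w (t + 1), w t - w (t + 1)⟫
          = ‖w t - w (t + 1)‖ ^ 2 - η * ⟪g, w t - w (t + 1)⟫ := by
        have e : (w t - η • g) - w (t + 1) = (w t - w (t + 1)) - η • g := by abel
        rw [e, inner_sub_left, real_inner_smul_left, real_inner_self_eq_norm_sq]
      rw [hexp] at h1
      have hcs := real_inner_le_norm g (w t - w (t + 1))
      have h2 : ‖w t - w (t + 1)‖ ^ 2 ≤ η * ‖g‖ * ‖w t - w (t + 1)‖ := by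
        have := mul_le_mul_of_nonneg_left hcs hη.le
        nlinarith [this]
      rcases eq_or_lt_of_le (norm_nonneg (w t - w (t + 1))) with h0 | h0
      · rw [← h0]; positivity
      · have h3 : ‖w t - w (t + 1)‖ * ‖w t - w (t + 1)‖
            ≤ (η * ‖g‖) * ‖w t - w (t + 1)‖ := by nlinarith
        have h4 := (mul_le_mul_iff_of_pos_right h0).mp h3
        calc ‖w t - w (t + 1)‖ ≤ η * ‖g‖ := h4
          _ ≤ η * G := by nlinarith
    -- descent inequality
    have hdesc : ‖w (t + 1) - u t‖ ^ 2
        ≤ ‖w t - u t‖ ^ 2 - 2 * η * ⟪g, w t - u t⟫ + η ^ 2 * ‖g‖ ^ 2 := by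
      have h1 := hVI (u t) hutW
      have e1 : (w t - η • g) - u t = ((w t - η • g) - w (t + 1)) + (w (t + 1) - u t) := by
        abel
      have e2 : ‖(w t - η • g) - u t‖ ^ 2
          = ‖(w t - η • g) - w (t + 1)‖ ^ 2
            + 2 * ⟪(w t - η • g) - w (t + 1), w (t + 1) - u t⟫
            + ‖w (t + 1) - u t‖ ^ 2 := by
        rw [e1, @norm_add_sq_real]
      have e3 : ‖(w t - η • g) - u t‖ ^ 2
          = ‖w t - u t‖ ^ 2 - 2 * η * ⟪g, w t - u t⟫ + η ^ 2 * ‖g‖ ^ 2 := by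
        have e : (w t - η • g) - u t = (w t - u t) - η • g := by abel
        rw [e, @norm_sub_sq_real, real_inner_smul_right, norm_smul, Real.norm_eq_abs,
          mul_pow, sq_abs, real_inner_comm]
        ring
      have h4 : 0 ≤ ⟪(w t - η • g) - w (t + 1), w (t + 1) - u t⟫ := by
        have e : w (t + 1) - u t = -(u t - w (t + 1)) := by abel
        rw [e, inner_neg_right]
        linarith
      linarith [sq_nonneg ‖(w t - η • g) - w (t + 1)‖, e2, e3, h4]
    -- gradient inequality
    have hgi : f t (w t) - f t (u t) ≤ ⟪g, w t - u t⟫ := by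
      have h := gradIneq (hconv t ht1 htT) (hdiff t ht1 htT) (w t) (u t)
      have e : ⟪g, u t - w t⟫ = -⟪g, w t - u t⟫ := by
        rw [show u t - w t = -(w t - u t) by abel, inner_neg_right]
      rw [← hgdef] at h
      linarith [h, e.le, e.ge]
    -- telescoping correction
    have hcorr : ‖w (t + 1) - u (t + 1)‖ ^ 2 - ‖w (t + 1) - u t‖ ^ 2
        ≤ 2 * D * ‖u t - u (t + 1)‖ := by
      have hA : ‖w (t + 1) - u (t + 1)‖ ≤ D := hdiam _ hwt1W _ hut1W
      have hB : ‖w (t + 1) - u t‖ ≤ D := hdiam _ hwt1W _ hutW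
      have hAB : ‖w (t + 1) - u (t + 1)‖ ≤ ‖w (t + 1) - u t‖ + ‖u t - u (t + 1)‖ := by
        have e : w (t + 1) - u (t + 1) = (w (t + 1) - u t) + (u t - u (t + 1)) := by abel
        rw [e]; exact norm_add_le _ _
      rcases le_or_gt ‖w (t + 1) - u (t + 1)‖ ‖w (t + 1) - u t‖ with hle | hlt
      · nlinarith [norm_nonneg (w (t + 1) - u t), norm_nonneg (w (t + 1) - u (t + 1)),
          norm_nonneg (u t - u (t + 1))]
      · have h1 : ‖w (t + 1) - u (t + 1)‖ - ‖w (t + 1) - u t‖ ≤ ‖u t - u (t + 1)‖ := by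
          linarith
        have h2 : ‖w (t + 1) - u (t + 1)‖ + ‖w (t + 1) - u t‖ ≤ 2 * D := by linarith
        have h3 := mul_le_mul h1 h2
          (by positivity) (norm_nonneg _)
        nlinarith [h3]
    -- combine
    have h2η : (0 : ℝ) < 2 * η := by linarith
    have hRHS : (a t - a (t + 1)) / (2 * η) + (D / η) * ‖u t - u (t + 1)‖
          + (1 + 2 * lam) * η * G ^ 2 / 2
        = (a t - a (t + 1) + 2 * D * ‖u t - u (t + 1)‖
            + (1 + 2 * lam) * η ^ 2 * G ^ 2) / (2 * η) := by
      field_simp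
    rw [hRHS, le_div_iff₀ h2η]
    have hg2 : ‖g‖ ^ 2 ≤ G ^ 2 := by nlinarith [norm_nonneg g]
    simp only [ha]
    have F1 : 2 * η * (f t (w t) - f t (u t)) ≤ 2 * η * ⟪g, w t - u t⟫ :=
      mul_le_mul_of_nonneg_left hgi (by positivity)
    have F5 : 2 * η * (lam * G * ‖w t - w (t + 1)‖) ≤ 2 * η * (lam * G * (η * G)) := by
      have h5 : lam * G * ‖w t - w (t + 1)‖ ≤ lam * G * (η * G) :=
        mul_le_mul_of_nonneg_left hswitch (by positivity)
      exact mul_le_mul_of_nonneg_left h5 (by positivity)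
    have F3 : η ^ 2 * ‖g‖ ^ 2 ≤ η ^ 2 * G ^ 2 :=
      mul_le_mul_of_nonneg_left hg2 (sq_nonneg η)
    nlinarith [F1, F5, F3, hdesc, hcorr]
  -- sum the per-step bounds
  have hsum := Finset.sum_le_sum key
  have hsplit : ∑ t ∈ Finset.Icc r s,
        ((a t - a (t + 1)) / (2 * η) + (D / η) * ‖u t - u (t + 1)‖
          + (1 + 2 * lam) * η * G ^ 2 / 2)
      = (∑ t ∈ Finset.Icc r s, (a t - a (t + 1))) / (2 * η)
        + (D / η) * ∑ t ∈ Finset.Icc r s, ‖u t - u (t + 1)‖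
        + ((Finset.Icc r s).card : ℝ) * ((1 + 2 * lam) * η * G ^ 2 / 2) := by
    rw [Finset.sum_add_distrib, Finset.sum_add_distrib, ← Finset.sum_div, ← Finset.mul_sum,
      Finset.sum_const, nsmul_eq_mul]
  have tel : ∀ n, r ≤ n → ∑ t ∈ Finset.Icc r n, (a t - a (t + 1)) = a r - a (n + 1) := by
    intro n hn
    induction n, hn using Nat.le_induction with
    | base => simp
    | succ n hn ih =>
      rw [Finset.sum_Icc_succ_top (by omega), ih]
      ring
  have hcard : ((Finset.Icc r s).card : ℝ) = (s : ℝ) - r + 1 := by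
    rw [Nat.card_Icc]
    have : (s + 1 - r : ℕ) = s + 1 - r := rfl
    push_cast [Nat.cast_sub (by omega : r ≤ s + 1)]
    ring
  have har : a r ≤ D ^ 2 := by
    have h1 : ‖w r - u r‖ ≤ D := hdiam _ (wmem r hr (by omega)) _ (hu r le_rfl (by omega))
    have h2 : (0:ℝ) ≤ ‖w r - u r‖ := norm_nonneg _
    simp only [ha]
    nlinarith
  have has1 : 0 ≤ a (s + 1) := by simp only [ha]; positivity
  have htel : (∑ t ∈ Finset.Icc r s, (a t - a (t + 1))) / (2 * η) ≤ D ^ 2 / (2 * η) := by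
    rw [tel s hrs]
    gcongr
    linarith
  calc ∑ t ∈ Finset.Icc r s, (f t (w t) + lam * G * ‖w t - w (t + 1)‖ - f t (u t))
      ≤ (∑ t ∈ Finset.Icc r s, (a t - a (t + 1))) / (2 * η)
        + (D / η) * ∑ t ∈ Finset.Icc r s, ‖u t - u (t + 1)‖
        + ((Finset.Icc r s).card : ℝ) * ((1 + 2 * lam) * η * G ^ 2 / 2) := by
        rw [← hsplit]; exact hsum
    _ ≤ D ^ 2 / (2 * η) + (D / η) * ∑ t ∈ Finset.Icc r s, ‖u t - u (t + 1)‖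
        + (1 + 2 * lam) * η * ((s : ℝ) - r + 1) * G ^ 2 / 2 := by
        rw [hcard]
        have : ((s : ℝ) - r + 1) * ((1 + 2 * lam) * η * G ^ 2 / 2)
            = (1 + 2 * lam) * η * ((s : ℝ) - r + 1) * G ^ 2 / 2 := by ring
        rw [this]
        linarith [htel]
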